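/- Let n ∈ ℕ and x, y ∈ ℝ with xy > 0. Then the extended generalized symmetric Pascal matrix Ψ_n[x,y], the (n+1)×(n+1) real matrix with entries (Ψ_n[x,y])_{ij} = x^{i−j} y^{i+j−2} · binom(i+j−2, j−1), is strictly totally positive. -/

import Mathlib

/-- A square real matrix is strictly totally positive if every minor (the
determinant of any square submatrix obtained by selecting rows and columns
along strictly increasing index sequences) is positive. -/
def IsStrictlyTotallyPositive {m : ℕ} (A : Matrix (Fin m) (Fin m) ℝ) : Prop :=
  ∀ (k : ℕ) (r c : Fin k → Fin m), StrictMono r → StrictMono c →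
    0 < (A.submatrix r c).det

/-- The extended generalized symmetric Pascal matrix `Ψ_n[x,y]`, the
`(n+1)×(n+1)` real matrix with entries
`(Ψ_n[x,y])_{ij} = x^{i−j}·y^{i+j−2}·binom(i+j−2, j−1)` (0-based indexing;
`x^{i−j}` is an integer power). -/
noncomputable def extGenSymPascal (n : ℕ) (x y : ℝ) :
    Matrix (Fin (n + 1)) (Fin (n + 1)) ℝ :=
  fun i j =>
    x ^ ((i : ℤ) - (j : ℤ)) * y ^ ((i : ℕ) + (j : ℕ)) *
      (((i : ℕ) + (j : ℕ)).choose (j : ℕ))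

namespace ExtPascalSTP

open Matrix Finset Equiv


theorem det_mul_expand {k N : ℕ} (A : Matrix (Fin k) (Fin N) ℝ) (B : Matrix (Fin N) (Fin k) ℝ) :
    (A * B).det = ∑ p : Fin k → Fin N, (∏ i, B (p i) i) * (A.submatrix id p).det := by
  simp only [Matrix.det_apply', Matrix.mul_apply, Finset.prod_univ_sum, Finset.mul_sum,
    Fintype.piFinset_univ]
  rw [Finset.sum_comm]
  refine Finset.sum_congr rfl fun p _ => ?_
  refine Finset.sum_congr rfl fun σ _ => ?_
  rw [Finset.prod_mul_distrib]
  simp only [Matrix.submatrix_apply, id_eq]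
  ring

private lemma card_image_eq {k N : ℕ} {p : Fin k → Fin N} (hp : Function.Injective p) :
    (Finset.univ.image p).card = k := by
  rw [Finset.card_image_of_injective _ hp, Finset.card_univ, Fintype.card_fin]

noncomputable def sortOf {k N : ℕ} (p : Fin k → Fin N) (hp : Function.Injective p) :
    Fin k → Fin N :=
  ⇑((Finset.univ.image p).orderEmbOfFin (card_image_eq hp))

noncomputable def permOf {k N : ℕ} (p : Fin k → Fin N) (hp : Function.Injective p) :
    Equiv.Perm (Fin k) :=
  Equiv.ofBijective
    (fun i => ((Finset.univ.image p).orderIsoOfFin (card_image_eq hp)).symm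
      ⟨p i, by simp [Finset.mem_image]⟩)
    (Finite.injective_iff_bijective.mp (fun a b hab => by
      have := congrArg (fun z => ((((Finset.univ.image p).orderIsoOfFin (card_image_eq hp)) z :
        Fin N))) hab
      simp only [OrderIso.apply_symm_apply] at this
      exact hp this))

lemma sortOf_strictMono {k N : ℕ} (p : Fin k → Fin N) (hp : Function.Injective p) :
    StrictMono (sortOf p hp) :=
  ((Finset.univ.image p).orderEmbOfFin (card_image_eq hp)).strictMono

lemma sortOf_range {k N : ℕ} (p : Fin k → Fin N) (hp : Function.Injective p) :
    Set.range (sortOf p hp) = Set.range p := by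
  rw [sortOf, Finset.range_orderEmbOfFin]
  simp [Finset.coe_image]

lemma sortOf_comp_permOf {k N : ℕ} (p : Fin k → Fin N) (hp : Function.Injective p) :
    sortOf p hp ∘ ⇑(permOf p hp) = p := by
  funext i
  simp only [sortOf, permOf, Function.comp_apply, Equiv.ofBijective_apply]
  rw [← Finset.coe_orderIsoOfFin_apply, OrderIso.apply_symm_apply]

theorem cauchyBinet {k N : ℕ} (A : Matrix (Fin k) (Fin N) ℝ) (B : Matrix (Fin N) (Fin k) ℝ) :
    (A * B).det = ∑ f ∈ Finset.univ.filter (fun f : Fin k → Fin N => StrictMono f),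
      (A.submatrix id f).det * (B.submatrix f id).det := by
  haveI : WellFoundedLT (Fin k) := inferInstance
  rw [det_mul_expand]
  rw [← Finset.sum_filter_add_sum_filter_not Finset.univ
    (fun p : Fin k → Fin N => Function.Injective p)]
  have h2 : ∑ p ∈ Finset.univ.filter (fun p : Fin k → Fin N => ¬ Function.Injective p),
      (∏ i, B (p i) i) * (A.submatrix id p).det = 0 := by
    refine Finset.sum_eq_zero fun p hp => ?_
    rw [Finset.mem_filter] at hp
    simp only [Function.Injective] at hp
    push_neg at hp
    obtain ⟨a, b, hab, hne⟩ := hp.2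
    have hz : (A.submatrix id p).det = 0 :=
      Matrix.det_zero_of_column_eq hne (fun i => by simp [Matrix.submatrix_apply, hab])
    rw [hz, mul_zero]
  rw [h2, add_zero]
  have hRHS : ∀ f : Fin k → Fin N,
      (A.submatrix id f).det * (B.submatrix f id).det
      = ∑ σ : Equiv.Perm (Fin k),
          (∏ i, B (f (σ i)) i) * (((Equiv.Perm.sign σ : ℤ) : ℝ) * (A.submatrix id f).det) := by
    intro f
    rw [Matrix.det_apply' (B.submatrix f id), Finset.mul_sum]
    refine Finset.sum_congr rfl fun σ _ => ?_
    simp only [Matrix.submatrix_apply, id_eq]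
    push_cast
    ring
  simp only [hRHS]
  rw [← Finset.sum_product']
  refine Finset.sum_bij'
    (i := fun p hp => (sortOf p (Finset.mem_filter.mp hp).2, permOf p (Finset.mem_filter.mp hp).2))
    (j := fun q _ => q.1 ∘ ⇑q.2) ?_ ?_ ?_ ?_ ?_
  · intro p hp
    simp only [Finset.mem_product, Finset.mem_filter, Finset.mem_univ, true_and]
    exact ⟨sortOf_strictMono p _, trivial⟩
  · intro q hq
    simp only [Finset.mem_product, Finset.mem_filter, Finset.mem_univ, true_and] at hq
    simp only [Finset.mem_filter, Finset.mem_univ, true_and]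
    exact (hq.1.injective).comp q.2.injective
  · -- left_inv : j (i p) = p
    intro p hp
    exact sortOf_comp_permOf p (Finset.mem_filter.mp hp).2
  · -- right_inv : i (j q) = q
    intro q hq
    simp only [Finset.mem_product, Finset.mem_filter, Finset.mem_univ, true_and] at hq
    obtain ⟨f, σ⟩ := q
    obtain hf := hq.1
    have hinj : Function.Injective (f ∘ ⇑σ) := hf.injective.comp σ.injective
    have hfeq : sortOf (f ∘ ⇑σ) hinj = f := by
      refine ((sortOf_strictMono _ hinj).range_inj hf).mp ?_
      rw [sortOf_range]
      rw [Set.range_comp, Equiv.range_eq_univ, Set.image_univ]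
    have hcomp := sortOf_comp_permOf (f ∘ ⇑σ) hinj
    rw [hfeq] at hcomp
    have hperm : permOf (f ∘ ⇑σ) hinj = σ := by
      refine Equiv.ext fun x => hf.injective ?_
      have := congrFun hcomp x
      simpa using this
    simp only [Prod.mk.injEq]
    exact ⟨hfeq, hperm⟩
  · -- summand equality
    intro p hp
    obtain hpi := (Finset.mem_filter.mp hp).2
    have hps : sortOf p hpi ∘ ⇑(permOf p hpi) = p := sortOf_comp_permOf p hpi
    have hsub : (A.submatrix id (sortOf p hpi)).submatrix id ⇑(permOf p hpi)
        = A.submatrix id p := by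
      rw [Matrix.submatrix_submatrix, hps]
      simp
    have hdet : (A.submatrix id p).det
        = ((Equiv.Perm.sign (permOf p hpi) : ℤ) : ℝ) * (A.submatrix id (sortOf p hpi)).det := by
      rw [← hsub, Matrix.det_permute']
    have hprod : (∏ i, B (p i) i) = ∏ i, B (sortOf p hpi (permOf p hpi i)) i := by
      refine Finset.prod_congr rfl fun i _ => ?_
      rw [← congrFun hps i]
      rfl
    rw [hdet, ← hprod]



lemma det_matching {k : ℕ} (u w : Fin k → ℕ) (hu : StrictMono u) (hw : Monotone w) :
    0 ≤ (Matrix.of fun a t : Fin k => if u a = w t then (1:ℝ) else 0).det := by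
  by_cases hsw : StrictMono w
  · rw [Matrix.det_apply']
    rw [Finset.sum_eq_single 1]
    · simp only [Equiv.Perm.sign_one, Units.val_one, Int.cast_one, one_mul]
      refine Finset.prod_nonneg fun i _ => ?_
      simp only [Matrix.of_apply, Equiv.Perm.one_apply]
      split <;> norm_num
    · intro σ _ hσ
      have hz : ∏ i, (Matrix.of fun a t : Fin k => if u a = w t then (1:ℝ) else 0) (σ i) i
          = 0 := by
        by_contra hne
        have hall : ∀ i, u (σ i) = w i := by
          intro i
          have := Finset.prod_ne_zero_iff.mp hne i (Finset.mem_univ i)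
          simp only [Matrix.of_apply] at this
          by_contra hc
          simp [hc] at this
        have hmono : StrictMono ⇑σ := by
          intro i j hij
          have : u (σ i) < u (σ j) := by rw [hall i, hall j]; exact hsw hij
          exact hu.lt_iff_lt.mp this
        haveI : WellFoundedLT (Fin k) := inferInstance
        have h2 : ⇑σ = id := (hmono.range_inj strictMono_id).mp
          (by rw [Set.range_id, Equiv.range_eq_univ])
        exact hσ (Equiv.ext fun x => congrFun h2 x)
      rw [hz, mul_zero]
    · intro h; exact absurd (Finset.mem_univ _) h
  · obtain ⟨a, b, hab, hnlt⟩ : ∃ a b, a < b ∧ ¬ w a < w b := by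
      by_contra hc
      push_neg at hc
      exact hsw fun a b h => hc a b h
    have heq : w a = w b := le_antisymm (hw hab.le) (not_lt.mp hnlt)
    have hz := Matrix.det_zero_of_column_eq (M := Matrix.of fun a t : Fin k =>
      if u a = w t then (1:ℝ) else 0) hab.ne (fun i => by simp [heq])
    rw [hz]

lemma det_bidiag_pure {m k : ℕ} (hk : k ≤ m) (u w : Fin k → ℕ) (hu : StrictMono u)
    (hw : Monotone w) :
    0 ≤ (Matrix.of fun a t : Fin k =>
      (if u a = w t then (1:ℝ) else 0) + (if m ≤ (t:ℕ) ∧ u a + 1 = w t then 1 else 0)).det := by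
  have hmat : (Matrix.of fun a t : Fin k =>
      (if u a = w t then (1:ℝ) else 0) + (if m ≤ (t:ℕ) ∧ u a + 1 = w t then 1 else 0))
      = Matrix.of fun a t : Fin k => if u a = w t then (1:ℝ) else 0 := by
    ext a t
    have ht : ¬ (m ≤ (t:ℕ)) := by have := t.isLt; omega
    simp [ht]
  rw [hmat]
  exact det_matching u w hu hw

lemma det_bidiag_aux : ∀ (d m k : ℕ), k ≤ m + d → ∀ (u w s : Fin k → ℕ),
    StrictMono u → StrictMono s → Monotone w →
    (∀ t : Fin k, m ≤ (t:ℕ) → w t = s t) → (∀ t : Fin k, w t ≤ s t) →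
    0 ≤ (Matrix.of fun a t : Fin k =>
      (if u a = w t then (1:ℝ) else 0) + (if m ≤ (t:ℕ) ∧ u a + 1 = w t then 1 else 0)).det := by
  intro d
  induction d with
  | zero =>
    intro m k hk u w s hu _ hw _ _
    exact det_bidiag_pure (by omega) u w hu hw
  | succ d ih =>
    intro m k hk u w s hu hs hw hpure hle
    by_cases hm : k ≤ m
    · exact det_bidiag_pure hm u w hu hw
    push_neg at hm
    set tm : Fin k := ⟨m, hm⟩ with htm
    have htmv : (tm : ℕ) = m := rfl
    set M1 : Matrix (Fin k) (Fin k) ℝ := Matrix.of fun a t : Fin k =>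
      (if u a = w t then (1:ℝ) else 0) + (if m + 1 ≤ (t:ℕ) ∧ u a + 1 = w t then 1 else 0)
      with hM1
    have hM : (Matrix.of fun a t : Fin k =>
        (if u a = w t then (1:ℝ) else 0) + (if m ≤ (t:ℕ) ∧ u a + 1 = w t then 1 else 0))
        = M1.updateCol tm (fun a =>
            (if u a = w tm then (1:ℝ) else 0) + (if u a + 1 = w tm then 1 else 0)) := by
      ext a t
      rw [Matrix.updateCol_apply]
      by_cases ht : t = tm
      · subst ht
        simp [htmv]
      · have htv : (t : ℕ) ≠ m := fun h => ht (Fin.ext h)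
        have hiff : (m ≤ (t:ℕ)) ↔ (m + 1 ≤ (t:ℕ)) := by omega
        simp only [if_neg ht, Matrix.of_apply, hM1]
        rw [if_congr (and_congr_left' hiff) rfl rfl]
    have hsum : (fun a => (if u a = w tm then (1:ℝ) else 0) + (if u a + 1 = w tm then 1 else 0))
        = (fun a => (if u a = w tm then (1:ℝ) else 0))
          + (fun a => (if u a + 1 = w tm then (1:ℝ) else 0)) := rfl
    rw [hM, hsum, Matrix.det_updateCol_add]
    have h1 : M1.updateCol tm (fun a => if u a = w tm then (1:ℝ) else 0) = M1 := by
      ext a t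
      rw [Matrix.updateCol_apply]
      by_cases ht : t = tm
      · subst ht
        simp [hM1, htmv]
      · rw [if_neg ht]
    rw [h1]
    have hd1 : 0 ≤ M1.det :=
      ih (m + 1) k (by omega) u w s hu hs hw (fun t h => hpure t (by omega)) hle
    have hwtms : w tm = s tm := hpure tm (le_refl m)
    have hd2 : 0 ≤ (M1.updateCol tm (fun a => if u a + 1 = w tm then (1:ℝ) else 0)).det := by
      rcases hwtm : w tm with _ | wv
      · have hz : (M1.updateCol tm (fun a => if u a + 1 = 0 then (1:ℝ) else 0)).det = 0 := by
          refine Matrix.det_eq_zero_of_column_eq_zero tm (fun a => ?_)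
          rw [Matrix.updateCol_self]
          simp
        rw [hz]
      · set w' := Function.update w tm wv with hw'
        have hcol : M1.updateCol tm (fun a => if u a + 1 = wv + 1 then (1:ℝ) else 0)
            = Matrix.of fun a t : Fin k =>
              (if u a = w' t then (1:ℝ) else 0)
                + (if m + 1 ≤ (t:ℕ) ∧ u a + 1 = w' t then 1 else 0) := by
          ext a t
          rw [Matrix.updateCol_apply]
          by_cases ht : t = tm
          · subst ht
            have hnle : ¬ (m + 1 ≤ (tm:ℕ)) := by omega
            simp only [Matrix.of_apply, hw', Function.update_self, hnle, false_and, if_false,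
              add_zero, if_true, if_pos rfl]
            rw [if_congr (by omega : u a + 1 = wv + 1 ↔ u a = wv) rfl rfl]
          · simp only [if_neg ht, Matrix.of_apply, hM1, hw', Function.update_of_ne ht]
        rw [hcol]
        have hwmono : Monotone w' := by
          intro a b hab
          by_cases ha : a = tm <;> by_cases hb : b = tm
          · subst ha; subst hb; exact le_refl _
          · subst ha
            have hb' : tm < b := lt_of_le_of_ne hab (fun h => hb h.symm)
            rw [hw', Function.update_self, Function.update_of_ne hb]
            have h1 : wv ≤ w tm := by omega
            exact le_trans h1 (hw hb'.le)
          · subst hb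
            have ha' : a < tm := lt_of_le_of_ne hab ha
            rw [hw', Function.update_of_ne ha, Function.update_self]
            have h1 : s a < s tm := hs ha'
            have h2 : w a ≤ s a := hle a
            omega
          · rw [hw', Function.update_of_ne ha, Function.update_of_ne hb]
            exact hw hab
        have hpure' : ∀ t : Fin k, m + 1 ≤ (t:ℕ) → w' t = s t := by
          intro t ht
          have htne : t ≠ tm := by
            intro h
            rw [h] at ht
            omega
          rw [hw', Function.update_of_ne htne]
          exact hpure t (by omega)
        have hle' : ∀ t : Fin k, w' t ≤ s t := by
          intro t
          by_cases ht : t = tm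
          · subst ht
            rw [hw', Function.update_self]
            omega
          · rw [hw', Function.update_of_ne ht]
            exact hle t
        exact ih (m + 1) k (by omega) u w' s hu hs hwmono hpure' hle'
    linarith


lemma det_bidiag {k : ℕ} (u s : Fin k → ℕ) (hu : StrictMono u) (hs : StrictMono s) :
    0 ≤ (Matrix.of fun a t : Fin k =>
      (if u a = s t then (1:ℝ) else 0) + (if u a + 1 = s t then 1 else 0)).det := by
  have h := det_bidiag_aux k 0 k (by omega) u s s hu hs hs.monotone
    (fun t _ => rfl) (fun t => le_refl _)
  have hmat : (Matrix.of fun a t : Fin k =>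
      (if u a = s t then (1:ℝ) else 0) + (if 0 ≤ (t:ℕ) ∧ u a + 1 = s t then 1 else 0))
      = Matrix.of fun a t : Fin k =>
      (if u a = s t then (1:ℝ) else 0) + (if u a + 1 = s t then 1 else 0) := by
    ext a t
    simp [Nat.zero_le]
  rwa [hmat] at h

lemma val_comp_strictMono {k N : ℕ} {f : Fin k → Fin N} (hf : StrictMono f) :
    StrictMono fun a => ((f a : ℕ)) := fun a b h => hf h

lemma choose_step (N : ℕ)
    (ih : ∀ (k : ℕ) (r s : Fin k → ℕ), StrictMono r → StrictMono s → (∀ i, r i ≤ N) →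
      0 ≤ (Matrix.of fun i t : Fin k => ((r i).choose (s t) : ℝ)).det) :
    ∀ (k : ℕ) (r s : Fin k → ℕ), StrictMono r → StrictMono s → (∀ i, 1 ≤ r i) →
      (∀ i, r i ≤ N + 1) →
      0 ≤ (Matrix.of fun i t : Fin k => ((r i).choose (s t) : ℝ)).det := by
  intro k r s hr hs h1 hN
  set M := (Finset.univ.sup s) + 1 with hM
  have hsM : ∀ t, s t < M := fun t => Nat.lt_succ_of_le (Finset.le_sup (Finset.mem_univ t))
  set r' : Fin k → ℕ := fun i => r i - 1 with hr'
  have hr'm : StrictMono r' := by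
    intro a b hab
    have h2 := hr hab
    have h3 := h1 a
    simp only [hr']
    omega
  set A : Matrix (Fin k) (Fin M) ℝ := Matrix.of fun i u => ((r' i).choose ((u:ℕ)) : ℝ) with hA
  set B : Matrix (Fin M) (Fin k) ℝ := Matrix.of fun u t =>
    (if (u:ℕ) = s t then (1:ℝ) else 0) + (if (u:ℕ) + 1 = s t then 1 else 0) with hB
  have hAB : (Matrix.of fun i t : Fin k => ((r i).choose (s t) : ℝ)) = A * B := by
    ext i t
    rw [Matrix.mul_apply]
    have hrange := Fin.sum_univ_eq_sum_range
      (fun u => ((r' i).choose u : ℝ) *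
        ((if u = s t then (1:ℝ) else 0) + (if u + 1 = s t then 1 else 0))) M
    simp only [Matrix.of_apply, hA, hB]
    rw [hrange]
    simp only [mul_add, Finset.sum_add_distrib, mul_ite, mul_one, mul_zero]
    rcases hst : s t with _ | v
    · rw [Finset.sum_ite_eq' (Finset.range M) 0 (fun u => ((r' i).choose u : ℝ))]
      have hz : ∀ u ∈ Finset.range M, (if u + 1 = 0 then ((r' i).choose u : ℝ) else 0) = 0 :=
        fun u _ => by simp
      rw [Finset.sum_congr rfl hz]
      simp only [Finset.sum_const_zero, add_zero, Finset.mem_range]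
      have h0M : 0 < M := by omega
      rw [if_pos h0M]
      simp
    · have hc1 : ∀ u ∈ Finset.range M, (if u + 1 = v + 1 then ((r' i).choose u : ℝ) else 0)
          = (if u = v then ((r' i).choose u : ℝ) else 0) := by
        intro u _
        rw [if_congr (by omega : u + 1 = v + 1 ↔ u = v) rfl rfl]
      rw [Finset.sum_congr rfl hc1,
        Finset.sum_ite_eq' (Finset.range M) (v+1) (fun u => ((r' i).choose u : ℝ)),
        Finset.sum_ite_eq' (Finset.range M) v (fun u => ((r' i).choose u : ℝ))]
      have hv1 : v + 1 ∈ Finset.range M := by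
        have := hsM t
        rw [hst] at this
        exact Finset.mem_range.mpr this
      have hv : v ∈ Finset.range M := by
        simp only [Finset.mem_range] at hv1 ⊢
        omega
      rw [if_pos hv1, if_pos hv]
      have hch : (r i).choose (v + 1) = (r' i).choose (v + 1) + (r' i).choose v := by
        have hri : r i = r' i + 1 := by
          have := h1 i
          simp only [hr']
          omega
        rw [hri, Nat.choose_succ_succ]
        simp only [Nat.succ_eq_add_one]
        omega
      rw [hch]
      push_cast
      ring
  rw [hAB, cauchyBinet]
  refine Finset.sum_nonneg fun f hf => ?_
  have hfm : StrictMono f := (Finset.mem_filter.mp hf).2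
  have hA0 : 0 ≤ (A.submatrix id f).det := by
    have h := ih k r' (fun a => ((f a : ℕ))) hr'm (val_comp_strictMono hfm)
      (fun i => by have := h1 i; have := hN i; simp only [hr']; omega)
    exact h
  have hB0 : 0 ≤ (B.submatrix f id).det := by
    have h := det_bidiag (fun a => ((f a : ℕ))) s (val_comp_strictMono hfm) hs
    exact h
  exact mul_nonneg hA0 hB0

lemma choose_TN : ∀ (N k : ℕ) (r s : Fin k → ℕ), StrictMono r → StrictMono s →
    (∀ i, r i ≤ N) → 0 ≤ (Matrix.of fun i t : Fin k => ((r i).choose (s t) : ℝ)).det := by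
  intro N
  induction N with
  | zero =>
    intro k r s hr hs hb
    match k with
    | 0 => simp [Matrix.det_isEmpty]
    | 1 =>
      rw [Matrix.det_unique]
      simp only [Matrix.of_apply]
      exact Nat.cast_nonneg _
    | (k+2) =>
      exfalso
      have h01 : r 0 < r 1 := hr (by simp [Fin.lt_def])
      have hb0 := hb 0
      have hb1 := hb 1
      omega
  | succ N ih =>
    intro k r s hr hs hb
    match k with
    | 0 => simp [Matrix.det_isEmpty]
    | (k+1) =>
      by_cases h1 : ∀ i, 1 ≤ r i
      · exact choose_step N ih (k+1) r s hr hs h1 hb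
      · push_neg at h1
        obtain ⟨i0, hi0⟩ := h1
        have hr0 : r 0 = 0 := by
          have h2 : r 0 ≤ r i0 := hr.monotone (Fin.zero_le i0)
          omega
        by_cases hs0 : s 0 = 0
        · rw [Matrix.det_succ_row_zero]
          have hzero : ∀ j : Fin (k+1), j ∈ Finset.univ → j ≠ 0 →
              (-1:ℝ)^(j:ℕ) * (Matrix.of fun i t : Fin (k+1) => ((r i).choose (s t) : ℝ)) 0 j *
                ((Matrix.of fun i t : Fin (k+1) => ((r i).choose (s t) : ℝ)).submatrix
                  Fin.succ j.succAbove).det = 0 := by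
            intro j _ hj
            have hsj : 0 < s j := by
              have h2 : s 0 < s j := hs (Fin.pos_iff_ne_zero.mpr hj)
              omega
            have hcz : (r 0).choose (s j) = 0 :=
              Nat.choose_eq_zero_of_lt (by rw [hr0]; exact hsj)
            simp [hcz]
          rw [Finset.sum_eq_single_of_mem 0 (Finset.mem_univ 0) (fun j hj hjne => hzero j hj hjne)]
          simp only [Fin.val_zero, pow_zero, one_mul, Matrix.of_apply, hr0, hs0,
            Nat.choose_self, Nat.cast_one, Fin.succAbove_zero]
          have hstep := choose_step N ih k (r ∘ Fin.succ) (s ∘ Fin.succ)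
            (hr.comp Fin.strictMono_succ) (hs.comp Fin.strictMono_succ)
            (fun i => by
              show 1 ≤ r (Fin.succ i)
              have h2 : r 0 < r (Fin.succ i) := hr (Fin.succ_pos i)
              omega)
            (fun i => hb _)
          exact hstep
        · have hz : (Matrix.of fun i t : Fin (k+1) => ((r i).choose (s t) : ℝ)).det = 0 := by
            refine Matrix.det_eq_zero_of_row_eq_zero 0 (fun t => ?_)
            have hst : 0 < s t := by
              have h2 : s 0 ≤ s t := hs.monotone (Fin.zero_le t)
              omega
            have hcz : (r 0).choose (s t) = 0 :=
              Nat.choose_eq_zero_of_lt (by rw [hr0]; exact hst)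
            simp [hcz]
          rw [hz]

lemma choose_corner_pos {k : ℕ} (r : Fin k → ℕ) (hr : StrictMono r) :
    0 < (Matrix.of fun i t : Fin k => ((r i).choose ((t:ℕ)) : ℝ)).det := by
  have heval : (Matrix.of fun i t : Fin k => ((descPochhammer ℝ (t:ℕ)).eval ((r i : ℝ))))
      = Matrix.of fun i t : Fin k =>
          ((t:ℕ).factorial : ℝ) * (((r i).choose ((t:ℕ)) : ℕ) : ℝ) := by
    ext i t
    simp only [Matrix.of_apply]
    rw [descPochhammer_eval_eq_descFactorial ℝ (r i) (t:ℕ),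
      Nat.descFactorial_eq_factorial_mul_choose]
    push_cast
    ring
  have hv : (Matrix.vandermonde fun i : Fin k => ((r i : ℕ) : ℝ)).det
      = (∏ t : Fin k, ((t:ℕ).factorial : ℝ)) *
        (Matrix.of fun i t : Fin k => ((r i).choose ((t:ℕ)) : ℝ)).det := by
    rw [Matrix.det_eval_matrixOfPolynomials_eq_det_vandermonde (fun i => ((r i : ℕ) : ℝ))
      (fun t => descPochhammer ℝ (t:ℕ)) (fun t => descPochhammer_natDegree ℝ (t:ℕ))
      (fun t => monic_descPochhammer ℝ (t:ℕ))]
    rw [heval]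
    exact Matrix.det_mul_row (fun t : Fin k => ((t:ℕ).factorial : ℝ))
      (Matrix.of fun i t : Fin k => ((r i).choose ((t:ℕ)) : ℝ))
  have hvpos : 0 < (Matrix.vandermonde fun i : Fin k => ((r i : ℕ) : ℝ)).det := by
    rw [Matrix.det_vandermonde]
    refine Finset.prod_pos fun i _ => Finset.prod_pos fun j hj => ?_
    have hij : i < j := Finset.mem_Ioi.mp hj
    have : r i < r j := hr hij
    have : ((r i : ℕ) : ℝ) < ((r j : ℕ) : ℝ) := by exact_mod_cast this
    linarith
  have hfpos : 0 < ∏ t : Fin k, ((t:ℕ).factorial : ℝ) :=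
    Finset.prod_pos fun t _ => by exact_mod_cast Nat.factorial_pos (t:ℕ)
  rw [hv] at hvpos
  rcases mul_pos_iff.mp hvpos with ⟨_, h⟩ | ⟨hneg, _⟩
  · exact h
  · linarith

lemma sum_choose_mul {a b M : ℕ} (h : b < M) :
    ∑ u ∈ Finset.range M, (a.choose u) * (b.choose u) = (a+b).choose b := by
  have hsub : Finset.range (b+1) ⊆ Finset.range M := Finset.range_subset_range.mpr (by omega)
  have hzero : ∀ u ∈ Finset.range M, u ∉ Finset.range (b+1) →
      a.choose u * b.choose u = 0 := by
    intro u _ hu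
    have : b < u := by simp only [Finset.mem_range] at hu; omega
    rw [Nat.choose_eq_zero_of_lt this, mul_zero]
  rw [← Finset.sum_subset hsub hzero]
  rw [Nat.add_choose_eq a b b, Finset.Nat.sum_antidiagonal_eq_sum_range_succ_mk]
  refine Finset.sum_congr rfl fun u hu => ?_
  have hub : u ≤ b := by simp only [Finset.mem_range] at hu; omega
  rw [Nat.choose_symm hub]

lemma pascal_minor_pos {k : ℕ} (r c : Fin k → ℕ) (hr : StrictMono r) (hc : StrictMono c) :
    0 < (Matrix.of fun i t : Fin k => ((r i + c t).choose (c t) : ℝ)).det := by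
  rcases k with _ | k'
  · simp [Matrix.det_isEmpty]
  set M := (Finset.univ.sup c) + 1 with hMdef
  have hcM : ∀ t, c t < M := fun t => Nat.lt_succ_of_le (Finset.le_sup (Finset.mem_univ t))
  have htle : ∀ t : Fin (k'+1), (t:ℕ) ≤ c t := by
    intro t
    induction t using Fin.induction with
    | zero => exact Nat.zero_le _
    | succ t ihp =>
      have h2 : c t.castSucc < c t.succ := hc (Fin.castSucc_lt_succ (i := t))
      have h3 : (t.castSucc : ℕ) = (t:ℕ) := rfl
      have h4 : (t.succ : ℕ) = (t:ℕ) + 1 := rfl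
      rw [h3] at ihp
      omega
  have hkM : k' + 1 ≤ M := by
    have h5 := htle (Fin.last k')
    have h6 := hcM (Fin.last k')
    have h7 : ((Fin.last k' : Fin (k'+1)) : ℕ) = k' := rfl
    omega
  set A : Matrix (Fin (k'+1)) (Fin M) ℝ :=
    Matrix.of fun i u => ((r i).choose ((u:ℕ)) : ℝ) with hA
  set B : Matrix (Fin M) (Fin (k'+1)) ℝ :=
    Matrix.of fun u t => ((c t).choose ((u:ℕ)) : ℝ) with hB
  have hAB : (Matrix.of fun i t : Fin (k'+1) => ((r i + c t).choose (c t) : ℝ)) = A * B := by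
    ext i t
    rw [Matrix.mul_apply]
    simp only [Matrix.of_apply, hA, hB]
    rw [Fin.sum_univ_eq_sum_range (fun u => ((r i).choose u : ℝ) * ((c t).choose u : ℝ)) M]
    have hid := sum_choose_mul (a := r i) (hcM t)
    have : ((∑ u ∈ Finset.range M, (r i).choose u * (c t).choose u : ℕ) : ℝ)
        = (((r i + c t).choose (c t) : ℕ) : ℝ) := by exact_mod_cast congrArg Nat.cast hid
    push_cast at this
    rw [← this]
  rw [hAB, cauchyBinet]
  have hnn : ∀ f ∈ Finset.univ.filter (fun f : Fin (k'+1) → Fin M => StrictMono f),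
      0 ≤ (A.submatrix id f).det * (B.submatrix f id).det := by
    intro f hf
    have hfm : StrictMono f := (Finset.mem_filter.mp hf).2
    have h1 : 0 ≤ (A.submatrix id f).det :=
      choose_TN (Finset.univ.sup r) (k'+1) r (fun a => ((f a : ℕ))) hr
        (val_comp_strictMono hfm) (fun i => Finset.le_sup (Finset.mem_univ i))
    have h2 : 0 ≤ (B.submatrix f id).det := by
      rw [← Matrix.det_transpose]
      have h3 := choose_TN (Finset.univ.sup c) (k'+1) c (fun a => ((f a : ℕ))) hc
        (val_comp_strictMono hfm) (fun i => Finset.le_sup (Finset.mem_univ i))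
      exact h3
    exact mul_nonneg h1 h2
  set f0 : Fin (k'+1) → Fin M := Fin.castLE hkM with hf0def
  have hf0 : StrictMono f0 := Fin.strictMono_castLE hkM
  have hf0mem : f0 ∈ Finset.univ.filter (fun f : Fin (k'+1) → Fin M => StrictMono f) := by
    simp only [Finset.mem_filter, Finset.mem_univ, true_and]
    exact hf0
  have hterm : 0 < (A.submatrix id f0).det * (B.submatrix f0 id).det := by
    have h1 : 0 < (A.submatrix id f0).det := by
      have := choose_corner_pos r hr
      exact this
    have h2 : 0 < (B.submatrix f0 id).det := by
      rw [← Matrix.det_transpose]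
      have := choose_corner_pos c hc
      exact this
    exact mul_pos h1 h2
  calc (0:ℝ) < (A.submatrix id f0).det * (B.submatrix f0 id).det := hterm
    _ ≤ _ := Finset.single_le_sum hnn hf0mem

lemma fin_val_strictMono {m k : ℕ} {r : Fin k → Fin m} (hr : StrictMono r) :
    StrictMono fun i => ((r i : ℕ)) := fun a b h => hr h

lemma entry_rewrite {x y : ℝ} (hx : x ≠ 0) (a b : ℕ) :
    x ^ ((a:ℤ) - (b:ℤ)) * y ^ (a+b) = (x*y)^a * ((y/x)^b) := by
  rw [zpow_sub₀ hx, zpow_natCast, zpow_natCast, pow_add, mul_pow, div_pow]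
  field_simp

end ExtPascalSTP

/-- For `xy > 0`, the extended generalized symmetric Pascal matrix
`Ψ_n[x,y]` is strictly totally positive. -/
theorem extGenSymPascal_strictlyTotallyPositive (n : ℕ) (x y : ℝ)
    (hxy : 0 < x * y) :
    IsStrictlyTotallyPositive (extGenSymPascal n x y) := by
  intro k r c hr hc
  have hx : x ≠ 0 := by
    rintro rfl
    rw [zero_mul] at hxy
    exact lt_irrefl 0 hxy
  have hxx : 0 < x * x := mul_self_pos.mpr hx
  have hq : 0 < y / x := by
    have h3 : (x * y) / (x * x) = y / x := by
      rw [mul_comm x y, mul_div_mul_right _ _ hx]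
    rw [← h3]
    exact div_pos hxy hxx
  have hsub : (extGenSymPascal n x y).submatrix r c
      = Matrix.of fun i t : Fin k => (fun i => (x*y)^((r i : ℕ))) i *
          (Matrix.of fun i t : Fin k => (fun t => (y/x)^((c t : ℕ))) t *
            (Matrix.of fun i t : Fin k =>
              ((((r i : ℕ)) + ((c t : ℕ))).choose ((c t : ℕ)) : ℝ)) i t) i t := by
    ext i t
    simp only [Matrix.submatrix_apply, extGenSymPascal, Matrix.of_apply]
    rw [show ((r i : Fin (n+1)) : ℤ) = (((r i : ℕ) : ℤ)) from rfl,
      show ((c t : Fin (n+1)) : ℤ) = (((c t : ℕ) : ℤ)) from rfl,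
      ExtPascalSTP.entry_rewrite hx]
    ring
  rw [hsub, Matrix.det_mul_column (fun i => (x*y)^((r i : ℕ))),
    Matrix.det_mul_row (fun t => (y/x)^((c t : ℕ)))]
  have hp := ExtPascalSTP.pascal_minor_pos (fun i => ((r i : ℕ))) (fun t => ((c t : ℕ)))
    (ExtPascalSTP.fin_val_strictMono hr) (ExtPascalSTP.fin_val_strictMono hc)
  have h1 : 0 < ∏ i : Fin k, (x*y)^((r i : ℕ)) :=
    Finset.prod_pos fun i _ => pow_pos hxy _
  have h2 : 0 < ∏ t : Fin k, (y/x)^((c t : ℕ)) :=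
    Finset.prod_pos fun t _ => pow_pos hq _
  exact mul_pos h1 (mul_pos h2 hp)
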